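/- arXiv:2008.00368 — 3 statements merged into one kernel-verified Lean document; each statement's English description precedes it below -/
import Mathlib

section
/- The entropy-based penalty is monotone along the tree order: if v is a descendant of v' in the value generalization hierarchy (so base(v) ⊆ base(v')), then E(v) ≤ E(v'), where E(u) = P(X ∈ base(u)) · H(X | X ∈ base(u)). -/
open scoped BigOperators

/-- Entropy-based penalty of a node with leaf-descendant set `base`:
`E = P(X ∈ base) · H(X | X ∈ base) = ∑_{a ∈ base} −P(X=a)·log(P(X=a)/P(X∈base))`. -/
noncomputable def Epen {α : Type*} (p : α → ℝ) (base : Finset α) : ℝ :=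
  ∑ a ∈ base, -(p a * Real.log (p a / ∑ b ∈ base, p b))

lemma Epen_term_nonneg {α : Type*} (p : α → ℝ) (hp : ∀ a, 0 ≤ p a)
    (T : Finset α) {a : α} (ha : a ∈ T) :
    0 ≤ -(p a * Real.log (p a / ∑ b ∈ T, p b)) := by
  rcases eq_or_lt_of_le (hp a) with h0 | h0
  · simp [← h0]
  · have hpa : 0 < ∑ b ∈ T, p b :=
      lt_of_lt_of_le h0 (Finset.single_le_sum (fun b _ => hp b) ha)
    have hle : p a / ∑ b ∈ T, p b ≤ 1 :=
      (div_le_one hpa).2 (Finset.single_le_sum (fun b _ => hp b) ha)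
    have := Real.log_nonpos (by positivity) hle
    nlinarith

/-- Monotonicity of the entropy-based penalty along the tree order: if `v` is a
descendant of `v'` (so `base v ⊆ base v'`), then `E(v) ≤ E(v')`. -/
theorem Epen_mono {α : Type*} [Fintype α]
    (p : α → ℝ) (hp : ∀ a, 0 ≤ p a) (hp1 : ∑ a, p a = 1)
    (S T : Finset α) (hST : S ⊆ T) :
    Epen p S ≤ Epen p T := by
  have hsum : (∑ b ∈ S, p b) ≤ ∑ b ∈ T, p b :=
    Finset.sum_le_sum_of_subset_of_nonneg hST (fun b _ _ => hp b)
  have step1 : Epen p S ≤ ∑ a ∈ S, -(p a * Real.log (p a / ∑ b ∈ T, p b)) := by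
    apply Finset.sum_le_sum
    intro a ha
    rcases eq_or_lt_of_le (hp a) with h0 | h0
    · simp [← h0]
    · have hS : 0 < ∑ b ∈ S, p b :=
        lt_of_lt_of_le h0 (Finset.single_le_sum (fun b _ => hp b) ha)
      have hT : 0 < ∑ b ∈ T, p b := lt_of_lt_of_le hS hsum
      have hdiv : p a / ∑ b ∈ T, p b ≤ p a / ∑ b ∈ S, p b :=
        div_le_div_of_nonneg_left (hp a) hS hsum
      have hlog : Real.log (p a / ∑ b ∈ T, p b) ≤ Real.log (p a / ∑ b ∈ S, p b) :=
        Real.log_le_log (by positivity) hdiv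
      nlinarith
  have step2 : (∑ a ∈ S, -(p a * Real.log (p a / ∑ b ∈ T, p b))) ≤ Epen p T :=
    Finset.sum_le_sum_of_subset_of_nonneg hST
      (fun b hb _ => Epen_term_nonneg p hp T hb)
  exact step1.trans step2
end

section
/- The weighted conflict-set pricing function is monotone under query determinacy: let S be a finite set of candidate databases with nonnegative weights w, and for a query Q over database D define price(Q) = Σ { w(D') : D' ∈ S, Q(D') ≠ Q(D) }. If query Q1 determines query Q2 (meaning there exists a function f with Q2(D') = f(Q1(D')) for every database D'), then price(Q2) ≤ price(Q1). -/
open scoped Classical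

/-- Weighted conflict-set price of a query `Q` over the true database `D`
with support set `S` and weights `w`: total weight of the support databases
on which `Q` disagrees with its answer on `D`. -/
noncomputable def queryPrice {DB A : Type*} (S : Finset DB) (w : DB → ℝ) (D : DB)
    (Q : DB → A) : ℝ :=
  ∑ D' ∈ S.filter (fun D' => Q D' ≠ Q D), w D'

/-- Weighted conflict-set pricing is monotone under query determinacy
(arbitrage-freeness): if `Q1` determines `Q2` (i.e. `Q2` factors through `Q1`)
then `price(Q2) ≤ price(Q1)`. -/
theorem queryPrice_mono_of_determines {DB A₁ A₂ : Type*}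
    (S : Finset DB) (w : DB → ℝ) (hw : ∀ D', 0 ≤ w D') (D : DB)
    (Q₁ : DB → A₁) (Q₂ : DB → A₂)
    (hdet : ∃ f : A₁ → A₂, ∀ D', Q₂ D' = f (Q₁ D')) :
    queryPrice S w D Q₂ ≤ queryPrice S w D Q₁ := by
  obtain ⟨f, hf⟩ := hdet
  apply Finset.sum_le_sum_of_subset_of_nonneg
  · intro x hx
    simp only [Finset.mem_filter] at *
    refine ⟨hx.1, fun h => hx.2 ?_⟩
    rw [hf, hf, h]
  · intro i _ _; exact hw i
end

section
/- Weighted conflict-set pricing is history-aware/regret-free in the following sense: with support set S, weights w ≥ 0, and database D, if after purchasing bundle B1 the seller reprices using the reduced support set S1 = {D' ∈ S : Q(D') = Q(D) for all Q ∈ B1}, then price_S(B1) + price_{S1}(B2) = price_S(B1 ∪ B2) for any bundle B2. -/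
open scoped Classical

/-- Weighted conflict-set price of a bundle `B` of queries with current
support set `S`. -/
noncomputable def bundlePrice {DB ι A : Type*} (S : Finset DB) (w : DB → ℝ) (D : DB)
    (eval : ι → DB → A) (B : Finset ι) : ℝ :=
  ∑ D' ∈ S.filter (fun D' => ∃ q ∈ B, eval q D' ≠ eval q D), w D'

/-- History-awareness / regret-freeness of weighted conflict-set pricing:
buying `B₁` from support set `S`, updating the support set to the databases
agreeing with `D` on all of `B₁`, and then buying `B₂`, costs exactly the
same as buying `B₁ ∪ B₂` at once. -/
theorem bundlePrice_history_aware {DB ι A : Type*}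
    (S : Finset DB) (w : DB → ℝ) (hw : ∀ D', 0 ≤ w D') (D : DB)
    (eval : ι → DB → A) (B₁ B₂ : Finset ι) :
    bundlePrice S w D eval B₁ +
        bundlePrice (S.filter (fun D' => ∀ q ∈ B₁, eval q D' = eval q D))
          w D eval B₂ =
      bundlePrice S w D eval (B₁ ∪ B₂) := by
  classical
  simp only [bundlePrice, Finset.filter_filter, Finset.sum_filter,
    ← Finset.sum_add_distrib]
  refine Finset.sum_congr rfl fun D' _ => ?_
  simp only [Finset.mem_union, ne_eq]
  by_cases h1 : ∃ q ∈ B₁, ¬ eval q D' = eval q D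
  · obtain ⟨q, hq, hne⟩ := h1
    rw [if_pos ⟨q, hq, hne⟩, if_neg (fun h => hne (h.1 q hq)),
      if_pos ⟨q, Or.inl hq, hne⟩, add_zero]
  · have h1' : ∀ q ∈ B₁, eval q D' = eval q D :=
      fun q hq => not_not.1 fun h => h1 ⟨q, hq, h⟩
    rw [if_neg h1, zero_add]
    by_cases h2 : ∃ q ∈ B₂, ¬ eval q D' = eval q D
    · obtain ⟨q, hq, hne⟩ := h2
      rw [if_pos ⟨h1', q, hq, hne⟩, if_pos ⟨q, Or.inr hq, hne⟩]
    · rw [if_neg (fun h => h2 h.2), if_neg ?_]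
      rintro ⟨q, hor, hne⟩
      rcases hor with h | h
      · exact hne (h1' q h)
      · exact h2 ⟨q, h, hne⟩
end
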